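/- Let p ∈ [3,4], Ω of finite measure in ℝ², F > 0, and define O₂(z; w, v) := F·∫_Ω |z|^{p-2} w · v for z, w, v ∈ L^4(Ω; ℝ²). Then there exists ℓ > 0 depending only on F, |Ω|, p such that |O₂(z; w, v) − O₂(y; w, v)| ≤ ℓ · (‖z‖_{L^4} + ‖y‖_{L^4})^{p-3} · ‖z − y‖_{L^4} · ‖w‖_{L^4} · ‖v‖_{L^4} for all z, y, w, v ∈ L^4(Ω; ℝ²). -/

import Mathlib

open MeasureTheory ENNReal

lemma aux_rpow_diff (q a b : ℝ) (hq : 1 ≤ q) (ha : 0 ≤ a) (hb : 0 ≤ b) :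
    |a ^ q - b ^ q| ≤ q * (a + b) ^ (q - 1) * |a - b| := by
  have hq0 : (0:ℝ) ≤ q := by linarith
  have key := Convex.norm_image_sub_le_of_norm_hasDerivWithin_le
    (f := fun t : ℝ => t ^ q) (f' := fun t : ℝ => q * t ^ (q - 1))
    (s := Set.Icc (0:ℝ) (a + b)) (C := q * (a + b) ^ (q - 1))
    (fun t _ => (Real.hasDerivAt_rpow_const (Or.inr hq)).hasDerivWithinAt)
    (fun t ht => by
      rw [Real.norm_eq_abs, abs_mul, abs_of_nonneg hq0,
        abs_of_nonneg (Real.rpow_nonneg ht.1 _)]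
      exact mul_le_mul_of_nonneg_left
        (Real.rpow_le_rpow ht.1 ht.2 (by linarith)) hq0)
    (convex_Icc _ _) ⟨hb, le_add_of_nonneg_left ha⟩ ⟨ha, le_add_of_nonneg_right hb⟩
  simpa [Real.norm_eq_abs] using key

lemma aux_holder {X : Type*} [MeasurableSpace X] (ν : Measure X)
    (A B C D : X → ℝ≥0∞) (hA : AEMeasurable A ν) (hB : AEMeasurable B ν)
    (hC : AEMeasurable C ν) (hD : AEMeasurable D ν)
    (β δ γ : ℝ) (hβ : 0 ≤ β) (hδ : 0 ≤ δ) (hγ : 0 ≤ γ)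
    (hsum : β + 1/2 + δ + γ = 1) :
    ∫⁻ x, A x ^ (4*β) * B x * C x * D x ^ (4*δ) ∂ν ≤
      (∫⁻ x, A x ^ (4:ℝ) ∂ν) ^ β * (∫⁻ x, B x ^ (4:ℝ) ∂ν) ^ (1/4:ℝ) *
      (∫⁻ x, C x ^ (4:ℝ) ∂ν) ^ (1/4:ℝ) * (∫⁻ x, D x ^ (4:ℝ) ∂ν) ^ δ *
      (ν Set.univ) ^ γ := by
  have key := ENNReal.lintegral_prod_norm_pow_le (μ := ν) (Finset.univ : Finset (Fin 5))
    (f := ![fun x => A x ^ (4:ℝ), fun x => B x ^ (4:ℝ), fun x => C x ^ (4:ℝ),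
            fun x => D x ^ (4:ℝ), fun _ => 1])
    (p := ![β, 1/4, 1/4, δ, γ])
    (by
      intro i _
      fin_cases i <;>
        simp only [Matrix.cons_val_zero, Matrix.cons_val_one, Matrix.head_cons,
          Matrix.cons_val_two, Matrix.tail_cons, Matrix.cons_val_three,
          Matrix.cons_val_four] <;>
        first
          | exact hA.pow_const _
          | exact hB.pow_const _
          | exact hC.pow_const _
          | exact hD.pow_const _
          | exact aemeasurable_const)
    (by simp [Fin.sum_univ_five]; linarith)
    (by intro i _; fin_cases i <;> norm_num [hβ, hδ, hγ])
  refine le_trans (le_of_eq ?_) (le_trans key (le_of_eq ?_))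
  · refine lintegral_congr fun x => ?_
    simp only [Fin.prod_univ_five, Matrix.cons_val_zero, Matrix.cons_val_one,
      Matrix.head_cons, Matrix.cons_val_two, Matrix.tail_cons,
      Matrix.cons_val_three, Matrix.cons_val_four, ENNReal.one_rpow]
    rw [← ENNReal.rpow_mul, ← ENNReal.rpow_mul, ← ENNReal.rpow_mul, ← ENNReal.rpow_mul]
    norm_num
  · simp only [Fin.prod_univ_five, Matrix.cons_val_zero, Matrix.cons_val_one,
      Matrix.head_cons, Matrix.cons_val_two, Matrix.tail_cons,
      Matrix.cons_val_three, Matrix.cons_val_four, lintegral_one]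

lemma aux_eLpNorm4 {X E : Type*} [MeasurableSpace X] [NormedAddCommGroup E]
    (ν : Measure X) (f : X → E) :
    eLpNorm f 4 ν = (∫⁻ x, (‖f x‖₊ : ℝ≥0∞) ^ (4:ℝ) ∂ν) ^ (1/4:ℝ) := by
  rw [eLpNorm_eq_lintegral_rpow_enorm_toReal (by norm_num) (by norm_num)]
  norm_num
  rfl

lemma aux_lint4_lt_top {X E : Type*} [MeasurableSpace X] [NormedAddCommGroup E]
    {ν : Measure X} {f : X → E} (hf : MemLp f 4 ν) :
    ∫⁻ x, (‖f x‖₊ : ℝ≥0∞) ^ (4:ℝ) ∂ν < ⊤ := by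
  have h := hf.eLpNorm_lt_top
  rw [aux_eLpNorm4] at h
  exact (ENNReal.rpow_lt_top_iff_of_pos (by norm_num)).mp h

theorem stmt18 (μ : Measure (EuclideanSpace ℝ (Fin 2)))
    (Ω : Set (EuclideanSpace ℝ (Fin 2))) (hΩ : MeasurableSet Ω) (hfin : μ Ω < ⊤)
    (p : ℝ) (hp : p ∈ Set.Icc (3 : ℝ) 4) (F : ℝ) (hF : 0 < F) :
    ∃ ℓ > 0, ∀ z y w v : EuclideanSpace ℝ (Fin 2) → EuclideanSpace ℝ (Fin 2),
      MemLp z 4 (μ.restrict Ω) → MemLp y 4 (μ.restrict Ω) →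
      MemLp w 4 (μ.restrict Ω) → MemLp v 4 (μ.restrict Ω) →
      |F * ∫ x, ‖z x‖ ^ (p - 2) * (inner ℝ (w x) (v x) : ℝ) ∂(μ.restrict Ω) -
          F * ∫ x, ‖y x‖ ^ (p - 2) * (inner ℝ (w x) (v x) : ℝ) ∂(μ.restrict Ω)| ≤
        ℓ * ((eLpNorm z 4 (μ.restrict Ω)).toReal +
              (eLpNorm y 4 (μ.restrict Ω)).toReal) ^ (p - 3) *
          (eLpNorm (fun x => z x - y x) 4 (μ.restrict Ω)).toReal *
          (eLpNorm w 4 (μ.restrict Ω)).toReal *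
          (eLpNorm v 4 (μ.restrict Ω)).toReal := by
  obtain ⟨hp3, hp4⟩ := hp
  set μ' := μ.restrict Ω with hμ'def
  set q : ℝ := p - 2 with hqdef
  have hq1 : 1 ≤ q := by simp only [hqdef]; linarith
  have hq2 : q ≤ 2 := by simp only [hqdef]; linarith
  have hq0 : 0 ≤ q := by linarith
  set m : ℝ := (μ Ω).toReal ^ ((4 - p)/4) with hmdef
  have hm0 : 0 ≤ m := Real.rpow_nonneg ENNReal.toReal_nonneg _
  refine ⟨F * 2 * (m + 1), by positivity, ?_⟩
  intro z y w v hz hy hw hv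
  have hcont : Continuous fun t : ℝ => t ^ q :=
    continuous_iff_continuousAt.2 fun x => Real.continuousAt_rpow_const x q (Or.inr hq0)
  -- integrability of each integrand
  have hint : ∀ u : EuclideanSpace ℝ (Fin 2) → EuclideanSpace ℝ (Fin 2),
      MemLp u 4 μ' →
      Integrable (fun x => ‖u x‖ ^ q * (inner ℝ (w x) (v x) : ℝ)) μ' := by
    intro u hu
    refine ⟨(hcont.comp_aestronglyMeasurable hu.1.norm).mul (hw.1.inner hv.1), ?_⟩
    rw [hasFiniteIntegral_iff_norm]
    calc ∫⁻ x, ENNReal.ofReal ‖‖u x‖ ^ q * (inner ℝ (w x) (v x) : ℝ)‖ ∂μ'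
        ≤ ∫⁻ x, (‖u x‖₊ : ℝ≥0∞) ^ (4*(q/4)) * (‖w x‖₊ : ℝ≥0∞) *
            (‖v x‖₊ : ℝ≥0∞) * (‖v x‖₊ : ℝ≥0∞) ^ (4*(0:ℝ)) ∂μ' := by
          refine lintegral_mono fun x => ?_
          rw [mul_zero, ENNReal.rpow_zero, mul_one]
          have h4q : 4*(q/4) = q := by ring
          rw [h4q]
          have h1 : ‖‖u x‖ ^ q * (inner ℝ (w x) (v x) : ℝ)‖ ≤
              ‖u x‖ ^ q * (‖w x‖ * ‖v x‖) := by
            rw [norm_mul, Real.norm_eq_abs (‖u x‖ ^ q),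
              abs_of_nonneg (Real.rpow_nonneg (norm_nonneg _) _), Real.norm_eq_abs]
            exact mul_le_mul_of_nonneg_left (abs_real_inner_le_norm _ _)
              (Real.rpow_nonneg (norm_nonneg _) _)
          refine le_trans (ENNReal.ofReal_le_ofReal h1) (le_of_eq ?_)
          rw [ENNReal.ofReal_mul (Real.rpow_nonneg (norm_nonneg _) _),
            ENNReal.ofReal_mul (norm_nonneg _),
            ← ENNReal.ofReal_rpow_of_nonneg (norm_nonneg _) hq0,
            ofReal_norm, ofReal_norm,
            ofReal_norm, enorm_eq_nnnorm, enorm_eq_nnnorm, enorm_eq_nnnorm]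
          ring
      _ ≤ (∫⁻ x, (‖u x‖₊ : ℝ≥0∞) ^ (4:ℝ) ∂μ') ^ (q/4) *
            (∫⁻ x, (‖w x‖₊ : ℝ≥0∞) ^ (4:ℝ) ∂μ') ^ (1/4:ℝ) *
            (∫⁻ x, (‖v x‖₊ : ℝ≥0∞) ^ (4:ℝ) ∂μ') ^ (1/4:ℝ) *
            (∫⁻ x, (‖v x‖₊ : ℝ≥0∞) ^ (4:ℝ) ∂μ') ^ (0:ℝ) *
            (μ' Set.univ) ^ ((2-q)/4) :=
          aux_holder μ' _ _ _ _ hu.1.enorm hw.1.enorm hv.1.enorm hv.1.enorm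
            (q/4) 0 ((2-q)/4) (by linarith) le_rfl (by linarith) (by ring)
      _ < ⊤ := by
          have h1 := aux_lint4_lt_top hu
          have h2 := aux_lint4_lt_top hw
          have h3 := aux_lint4_lt_top hv
          have h4 : μ' Set.univ < ⊤ := by
            rw [hμ'def, Measure.restrict_apply_univ]; exact hfin
          exact ENNReal.mul_lt_top
            (ENNReal.mul_lt_top
              (ENNReal.mul_lt_top
                (ENNReal.mul_lt_top
                  (ENNReal.rpow_lt_top_of_nonneg (by linarith) h1.ne)
                  (ENNReal.rpow_lt_top_of_nonneg (by norm_num) h2.ne))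
                (ENNReal.rpow_lt_top_of_nonneg (by norm_num) h3.ne))
              (ENNReal.rpow_lt_top_of_nonneg le_rfl h3.ne))
            (ENNReal.rpow_lt_top_of_nonneg (by linarith) h4.ne)
  have hintz := hint z hz
  have hinty := hint y hy
  -- the main estimate on the lintegral of the difference
  set SN : ℝ≥0∞ := eLpNorm z 4 μ' + eLpNorm y 4 μ' with hSNdef
  have hSNtop : SN ≠ ⊤ := (ENNReal.add_lt_top.2 ⟨hz.eLpNorm_lt_top, hy.eLpNorm_lt_top⟩).ne
  have hmain : ∫⁻ x, ENNReal.ofReal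
        ‖‖z x‖ ^ q * (inner ℝ (w x) (v x) : ℝ) - ‖y x‖ ^ q * (inner ℝ (w x) (v x) : ℝ)‖ ∂μ' ≤
      ENNReal.ofReal q * (SN ^ (q-1) * eLpNorm (fun x => z x - y x) 4 μ' *
        eLpNorm w 4 μ' * eLpNorm v 4 μ' * (μ Ω) ^ ((4-p)/4)) := by
    calc ∫⁻ x, ENNReal.ofReal
          ‖‖z x‖ ^ q * (inner ℝ (w x) (v x) : ℝ) - ‖y x‖ ^ q * (inner ℝ (w x) (v x) : ℝ)‖ ∂μ'
        ≤ ∫⁻ x, ENNReal.ofReal q *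
            (((‖z x‖₊ : ℝ≥0∞) + (‖y x‖₊ : ℝ≥0∞)) ^ (4*((q-1)/4)) *
              (‖z x - y x‖₊ : ℝ≥0∞) * (‖w x‖₊ : ℝ≥0∞) *
              (‖v x‖₊ : ℝ≥0∞) ^ (4*(1/4:ℝ))) ∂μ' := by
          refine lintegral_mono fun x => ?_
          have h4 : 4*((q-1)/4) = q - 1 := by ring
          have h5 : (4:ℝ)*(1/4) = 1 := by norm_num
          rw [h4, h5, ENNReal.rpow_one]
          have hreal : ‖‖z x‖ ^ q * (inner ℝ (w x) (v x) : ℝ) -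
              ‖y x‖ ^ q * (inner ℝ (w x) (v x) : ℝ)‖ ≤
              q * ((‖z x‖ + ‖y x‖) ^ (q-1) * (‖z x - y x‖ * (‖w x‖ * ‖v x‖))) := by
            rw [← sub_mul, Real.norm_eq_abs, abs_mul]
            have h1 := aux_rpow_diff q ‖z x‖ ‖y x‖ hq1 (norm_nonneg _) (norm_nonneg _)
            have h2 : |‖z x‖ - ‖y x‖| ≤ ‖z x - y x‖ := abs_norm_sub_norm_le _ _
            have h3 : |(inner ℝ (w x) (v x) : ℝ)| ≤ ‖w x‖ * ‖v x‖ :=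
              abs_real_inner_le_norm _ _
            have hb1 : (0:ℝ) ≤ (‖z x‖ + ‖y x‖) ^ (q-1) :=
              Real.rpow_nonneg (by positivity) _
            calc |‖z x‖ ^ q - ‖y x‖ ^ q| * |(inner ℝ (w x) (v x) : ℝ)|
                ≤ (q * (‖z x‖ + ‖y x‖) ^ (q-1) * ‖z x - y x‖) * (‖w x‖ * ‖v x‖) := by
                  refine mul_le_mul (le_trans h1 ?_) h3 (abs_nonneg _) (by positivity)
                  exact mul_le_mul_of_nonneg_left h2 (by positivity)
              _ = q * ((‖z x‖ + ‖y x‖) ^ (q-1) * (‖z x - y x‖ * (‖w x‖ * ‖v x‖))) := by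
                  ring
          have hb1 : (0:ℝ) ≤ (‖z x‖ + ‖y x‖) ^ (q-1) :=
            Real.rpow_nonneg (by positivity) _
          refine le_trans (ENNReal.ofReal_le_ofReal hreal) (le_of_eq ?_)
          rw [ENNReal.ofReal_mul hq0, ENNReal.ofReal_mul hb1,
            ENNReal.ofReal_mul (norm_nonneg _), ENNReal.ofReal_mul (norm_nonneg _),
            ← ENNReal.ofReal_rpow_of_nonneg (by positivity) (by linarith : (0:ℝ) ≤ q - 1),
            ENNReal.ofReal_add (norm_nonneg _) (norm_nonneg _)]
          simp only [ofReal_norm, enorm_eq_nnnorm]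
          ring
      _ = ENNReal.ofReal q * ∫⁻ x,
            (((‖z x‖₊ : ℝ≥0∞) + (‖y x‖₊ : ℝ≥0∞)) ^ (4*((q-1)/4)) *
              (‖z x - y x‖₊ : ℝ≥0∞) * (‖w x‖₊ : ℝ≥0∞) *
              (‖v x‖₊ : ℝ≥0∞) ^ (4*(1/4:ℝ))) ∂μ' :=
          lintegral_const_mul' _ _ ENNReal.ofReal_ne_top
      _ ≤ ENNReal.ofReal q *
            ((∫⁻ x, ((‖z x‖₊ : ℝ≥0∞) + (‖y x‖₊ : ℝ≥0∞)) ^ (4:ℝ) ∂μ') ^ ((q-1)/4) *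
             (∫⁻ x, (‖z x - y x‖₊ : ℝ≥0∞) ^ (4:ℝ) ∂μ') ^ (1/4:ℝ) *
             (∫⁻ x, (‖w x‖₊ : ℝ≥0∞) ^ (4:ℝ) ∂μ') ^ (1/4:ℝ) *
             (∫⁻ x, (‖v x‖₊ : ℝ≥0∞) ^ (4:ℝ) ∂μ') ^ (1/4:ℝ) *
             (μ' Set.univ) ^ ((4-p)/4)) := by
          refine mul_le_mul_right ?_ _
          exact aux_holder μ' _ _ _ _ (hz.1.enorm.add hy.1.enorm)
            (hz.1.sub hy.1).enorm hw.1.enorm hv.1.enorm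
            ((q-1)/4) (1/4) ((4-p)/4) (by linarith) (by norm_num) (by linarith)
            (by simp only [hqdef]; ring)
      _ ≤ ENNReal.ofReal q * (SN ^ (q-1) * eLpNorm (fun x => z x - y x) 4 μ' *
            eLpNorm w 4 μ' * eLpNorm v 4 μ' * (μ Ω) ^ ((4-p)/4)) := by
          refine mul_le_mul_right ?_ _
          rw [hμ'def, Measure.restrict_apply_univ]
          rw [← aux_eLpNorm4 μ' (fun x => z x - y x), ← aux_eLpNorm4 μ' w,
            ← aux_eLpNorm4 μ' v]
          refine mul_le_mul_left (mul_le_mul_left (mul_le_mul_left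
            (mul_le_mul_left ?_ _) _) _) _
          -- first factor
          have hpt : (fun x => ((‖z x‖₊ : ℝ≥0∞) + (‖y x‖₊ : ℝ≥0∞)) ^ (4:ℝ)) =
              fun x => ((‖(‖z x‖ + ‖y x‖)‖₊ : ℝ≥0∞)) ^ (4:ℝ) := by
            funext x
            have h2 : (‖(‖z x‖ + ‖y x‖)‖₊ : ℝ≥0∞) = ENNReal.ofReal (‖z x‖ + ‖y x‖) := by
              rw [← enorm_eq_nnnorm, ← ofReal_norm, Real.norm_of_nonneg (by positivity)]
            rw [h2, ENNReal.ofReal_add (norm_nonneg _) (norm_nonneg _),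
              ofReal_norm, ofReal_norm, enorm_eq_nnnorm, enorm_eq_nnnorm]
          have hsplit : ((q-1)/4) = (1/4:ℝ) * (q-1) := by ring
          rw [hsplit, ENNReal.rpow_mul, hpt, ← aux_eLpNorm4 μ' (fun x => ‖z x‖ + ‖y x‖)]
          refine ENNReal.rpow_le_rpow ?_ (by linarith)
          have := eLpNorm_add_le (μ := μ') (p := 4)
            hz.1.norm hy.1.norm (by norm_num)
          calc eLpNorm (fun x => ‖z x‖ + ‖y x‖) 4 μ'
              = eLpNorm ((fun x => ‖z x‖) + fun x => ‖y x‖) 4 μ' := rfl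
            _ ≤ eLpNorm (fun x => ‖z x‖) 4 μ' + eLpNorm (fun x => ‖y x‖) 4 μ' := this
            _ = SN := by rw [eLpNorm_norm, eLpNorm_norm]
  -- pass to real numbers
  have hRHStop : ENNReal.ofReal q * (SN ^ (q-1) * eLpNorm (fun x => z x - y x) 4 μ' *
      eLpNorm w 4 μ' * eLpNorm v 4 μ' * (μ Ω) ^ ((4-p)/4)) ≠ ⊤ := by
    refine ENNReal.mul_ne_top ENNReal.ofReal_ne_top ?_
    refine ENNReal.mul_ne_top (ENNReal.mul_ne_top (ENNReal.mul_ne_top (ENNReal.mul_ne_top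
      (ENNReal.rpow_lt_top_of_nonneg (by linarith) hSNtop).ne
      (hz.sub hy).eLpNorm_lt_top.ne) hw.eLpNorm_lt_top.ne) hv.eLpNorm_lt_top.ne)
      (ENNReal.rpow_lt_top_of_nonneg (by linarith) hfin.ne).ne
  have heq : F * (∫ x, ‖z x‖ ^ q * (inner ℝ (w x) (v x) : ℝ) ∂μ') -
      F * (∫ x, ‖y x‖ ^ q * (inner ℝ (w x) (v x) : ℝ) ∂μ') =
      F * ∫ x, (‖z x‖ ^ q * (inner ℝ (w x) (v x) : ℝ) -
        ‖y x‖ ^ q * (inner ℝ (w x) (v x) : ℝ)) ∂μ' := by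
    rw [integral_sub hintz hinty]; ring
  rw [heq, abs_mul, abs_of_pos hF]
  have hnorm := norm_integral_le_lintegral_norm (μ := μ')
    (f := fun x => ‖z x‖ ^ q * (inner ℝ (w x) (v x) : ℝ) -
      ‖y x‖ ^ q * (inner ℝ (w x) (v x) : ℝ))
  rw [Real.norm_eq_abs] at hnorm
  have hstep : |∫ x, (‖z x‖ ^ q * (inner ℝ (w x) (v x) : ℝ) -
      ‖y x‖ ^ q * (inner ℝ (w x) (v x) : ℝ)) ∂μ'| ≤
      q * ((eLpNorm z 4 μ').toReal + (eLpNorm y 4 μ').toReal) ^ (q-1) *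
        (eLpNorm (fun x => z x - y x) 4 μ').toReal *
        (eLpNorm w 4 μ').toReal * (eLpNorm v 4 μ').toReal * m := by
    refine le_trans hnorm (le_trans (ENNReal.toReal_mono hRHStop hmain) (le_of_eq ?_))
    rw [ENNReal.toReal_mul, ENNReal.toReal_ofReal hq0,
      ENNReal.toReal_mul, ENNReal.toReal_mul, ENNReal.toReal_mul, ENNReal.toReal_mul,
      ← ENNReal.toReal_rpow, ← ENNReal.toReal_rpow,
      hSNdef, ENNReal.toReal_add hz.eLpNorm_lt_top.ne hy.eLpNorm_lt_top.ne]
    ring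
  calc F * |∫ x, (‖z x‖ ^ q * (inner ℝ (w x) (v x) : ℝ) -
        ‖y x‖ ^ q * (inner ℝ (w x) (v x) : ℝ)) ∂μ'|
      ≤ F * (q * ((eLpNorm z 4 μ').toReal + (eLpNorm y 4 μ').toReal) ^ (q-1) *
        (eLpNorm (fun x => z x - y x) 4 μ').toReal *
        (eLpNorm w 4 μ').toReal * (eLpNorm v 4 μ').toReal * m) :=
        mul_le_mul_of_nonneg_left hstep (le_of_lt hF)
    _ ≤ F * 2 * (m + 1) *
        ((eLpNorm z 4 μ').toReal + (eLpNorm y 4 μ').toReal) ^ (p-3) *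
        (eLpNorm (fun x => z x - y x) 4 μ').toReal *
        (eLpNorm w 4 μ').toReal * (eLpNorm v 4 μ').toReal := by
        have hq3 : q - 1 = p - 3 := by simp only [hqdef]; ring
        rw [hq3]
        have hP : (0:ℝ) ≤ ((eLpNorm z 4 μ').toReal + (eLpNorm y 4 μ').toReal) ^ (p-3) *
            (eLpNorm (fun x => z x - y x) 4 μ').toReal *
            (eLpNorm w 4 μ').toReal * (eLpNorm v 4 μ').toReal := by
          have := Real.rpow_nonneg (x := (eLpNorm z 4 μ').toReal + (eLpNorm y 4 μ').toReal)
            (by positivity) (p-3)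
          positivity
        nlinarith [mul_nonneg (le_of_lt hF) hP, mul_nonneg hm0 (mul_nonneg (le_of_lt hF) hP)]
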